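/- Let λ < 0 and r₀ > 0. Suppose u₁, u₂ : (r₀,∞) → ℝ are C² solutions of −u'' − (4/r)u' + u + (r/2)u' = λu with Wronskian u₁'(r)u₂(r) − u₂'(r)u₁(r) = r^{−4} e^{r²/4}, satisfying for some C₀ > 0 and all r > r₀ the bounds |u₁(r)| ≤ C₀ r^{2(λ−1)}, |u₁'(r)| ≤ C₀ r^{2λ−3}, |u₂(r)| ≤ C₀ r^{−3−2λ} e^{r²/4}, |u₂'(r)| ≤ C₀ r^{−2−2λ} e^{r²/4}. Let f : (r₀,∞) → ℝ be continuous with M := sup_{r>r₀} r^{2(2−λ)} |f(r)| < ∞, and define τ(f)(r) = ( ∫_r^∞ f(s) u₂(s) s⁴ e^{−s²/4} ds ) u₁(r) − ( ∫_r^∞ f(s) u₁(s) s⁴ e^{−s²/4} ds ) u₂(r). Then τ(f) solves −v'' − (4/r)v' + v + (r/2)v' − λv = f on (r₀,∞), and there is a constant C (depending only on λ, r₀, C₀) with sup_{r>r₀} ( r^{2(2−λ)} |τ(f)(r)| + r^{2(2−λ)+1} |(τ(f))'(r)| ) ≤ C M. -/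

import Mathlib

open MeasureTheory Set Filter Topology

noncomputable section

lemma aux_hasDerivAt_exp_aux (s : ℝ) :
    HasDerivAt (fun t : ℝ => -2 * Real.exp (-(t ^ 2 / 4))) (s * Real.exp (-(s ^ 2 / 4))) s := by
  have h : HasDerivAt (fun t : ℝ => -(t ^ 2 / 4)) (-(s / 2)) s := by
    have := ((hasDerivAt_pow 2 s).div_const 4).neg
    refine this.congr_deriv ?_
    ring
  have := (h.exp).const_mul (-2 : ℝ)
  refine this.congr_deriv ?_
  ring

lemma aux_tendsto_exp : Tendsto (fun t : ℝ => -2 * Real.exp (-(t ^ 2 / 4))) atTop (𝓝 0) := by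
  have h1 : Tendsto (fun t : ℝ => -(t ^ 2 / 4)) atTop atBot := by
    apply Filter.tendsto_neg_atBot_iff.mpr
    exact (tendsto_pow_atTop (two_ne_zero)).atTop_div_const (by norm_num)
  have h2 : Tendsto (fun t : ℝ => Real.exp (-(t ^ 2 / 4))) atTop (𝓝 0) :=
    Real.tendsto_exp_atBot.comp h1
  have := h2.const_mul (-2 : ℝ)
  simpa using this

lemma aux_int_exp {r : ℝ} (hr : 0 ≤ r) :
    IntegrableOn (fun s : ℝ => s * Real.exp (-(s ^ 2 / 4))) (Set.Ioi r) ∧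
    ∫ s in Set.Ioi r, s * Real.exp (-(s ^ 2 / 4)) = 2 * Real.exp (-(r ^ 2 / 4)) := by
  have hd : ∀ x ∈ Ici r, HasDerivAt (fun t : ℝ => -2 * Real.exp (-(t ^ 2 / 4)))
      (x * Real.exp (-(x ^ 2 / 4))) x := fun x _ => aux_hasDerivAt_exp_aux x
  have hpos : ∀ x ∈ Ioi r, 0 ≤ x * Real.exp (-(x ^ 2 / 4)) := fun x hx =>
    mul_nonneg (le_trans hr (le_of_lt hx)) (Real.exp_pos _).le
  refine ⟨integrableOn_Ioi_deriv_of_nonneg' hd hpos aux_tendsto_exp, ?_⟩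
  rw [integral_Ioi_of_hasDerivAt_of_nonneg' hd hpos aux_tendsto_exp]
  ring

lemma aux_hasDerivAt_integral_Ioi {g : ℝ → ℝ} {r₀ r : ℝ} (hr : r₀ < r)
    (hint : ∀ a, r₀ < a → IntegrableOn g (Set.Ioi a))
    (hcont : ContinuousOn g (Set.Ioi r₀)) :
    HasDerivAt (fun x => ∫ s in Set.Ioi x, g s) (-(g r)) r := by
  set b := (r₀ + r) / 2 with hb
  have hb1 : r₀ < b := by simp only [hb]; linarith
  have hb2 : b < r := by simp only [hb]; linarith
  have key : ∀ x, b < x → (∫ s in Set.Ioi x, g s) = (∫ s in Set.Ioi b, g s) - ∫ t in b..x, g t := by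
    intro x hx
    have hdisj : Disjoint (Ioc b x) (Ioi x) := by
      apply Set.disjoint_left.mpr
      intro y hy1 hy2
      exact absurd hy1.2 (not_le.mpr hy2)
    have hunion : Ioc b x ∪ Ioi x = Ioi b := Set.Ioc_union_Ioi_eq_Ioi (le_of_lt hx)
    have h1 : IntegrableOn g (Ioc b x) := (hint b hb1).mono_set Set.Ioc_subset_Ioi_self
    have h2 : IntegrableOn g (Ioi x) := hint x (lt_trans hb1 hx)
    have := MeasureTheory.setIntegral_union hdisj measurableSet_Ioi h1 h2
    rw [hunion] at this
    rw [intervalIntegral.integral_of_le (le_of_lt hx)]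
    rw [this]
    ring
  have hF : HasDerivAt (fun x => (∫ s in Set.Ioi b, g s) - ∫ t in b..x, g t) (-(g r)) r := by
    have hii : IntervalIntegrable g volume b r := by
      rw [intervalIntegrable_iff_integrableOn_Ioc_of_le (le_of_lt hb2)]
      exact (hint b hb1).mono_set Set.Ioc_subset_Ioi_self
    have hms : StronglyMeasurableAtFilter g (𝓝 r) volume :=
      hcont.stronglyMeasurableAtFilter isOpen_Ioi r hr
    have hca : ContinuousAt g r := hcont.continuousAt (isOpen_Ioi.mem_nhds hr)
    exact (intervalIntegral.integral_hasDerivAt_right hii hms hca).const_sub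
      (∫ s in Set.Ioi b, g s)
  apply hF.congr_of_eventuallyEq
  filter_upwards [Ioi_mem_nhds hb2] with x hx
  exact key x hx

/-- Continuity of the resolvent: the variation-of-constants solution
`τ(f) = (∫_r^∞ f u₂ s⁴ e^{−s²/4} ds) u₁ − (∫_r^∞ f u₁ s⁴ e^{−s²/4} ds) u₂`
solves `(L^∞ − λ)(τ(f)) = f` on `(r₀,∞)` and satisfies the weighted bound
`sup_{r>r₀} ( r^{2(2−l)} |τ(f)| + r^{2(2−l)+1} |τ(f)'| ) ≲ sup_{r>r₀} r^{2(2−l)} |f|`,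
with a constant depending only on `λ, r₀, C₀`. -/
theorem resolvent_estimate_Linf
    (l : ℝ) (hl : l < 0) (r₀ : ℝ) (hr₀ : 0 < r₀) (C₀ : ℝ) (hC₀ : 0 < C₀)
    (u₁ u₂ : ℝ → ℝ)
    (hu₁ : ContDiffOn ℝ 2 u₁ (Set.Ioi r₀)) (hu₂ : ContDiffOn ℝ 2 u₂ (Set.Ioi r₀))
    (hode₁ : ∀ r : ℝ, r₀ < r →
      -(deriv (deriv u₁) r) - (4 / r) * deriv u₁ r + u₁ r + (r / 2) * deriv u₁ r = l * u₁ r)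
    (hode₂ : ∀ r : ℝ, r₀ < r →
      -(deriv (deriv u₂) r) - (4 / r) * deriv u₂ r + u₂ r + (r / 2) * deriv u₂ r = l * u₂ r)
    (hW : ∀ r : ℝ, r₀ < r →
      deriv u₁ r * u₂ r - deriv u₂ r * u₁ r = Real.exp (r ^ 2 / 4) / r ^ 4)
    (hb₁ : ∀ r : ℝ, r₀ < r → |u₁ r| ≤ C₀ * r ^ (2 * (l - 1)))
    (hb₁' : ∀ r : ℝ, r₀ < r → |deriv u₁ r| ≤ C₀ * r ^ (2 * l - 3))
    (hb₂ : ∀ r : ℝ, r₀ < r → |u₂ r| ≤ C₀ * r ^ (-3 - 2 * l) * Real.exp (r ^ 2 / 4))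
    (hb₂' : ∀ r : ℝ, r₀ < r → |deriv u₂ r| ≤ C₀ * r ^ (-2 - 2 * l) * Real.exp (r ^ 2 / 4)) :
    ∃ C : ℝ, 0 < C ∧
      ∀ f : ℝ → ℝ, ContinuousOn f (Set.Ioi r₀) →
        ∀ M : ℝ, (∀ r : ℝ, r₀ < r → r ^ (2 * (2 - l)) * |f r| ≤ M) →
          ∀ v : ℝ → ℝ,
            (∀ r : ℝ, v r =
              (∫ s in Set.Ioi r, f s * u₂ s * s ^ 4 * Real.exp (-(s ^ 2 / 4))) * u₁ r
              - (∫ s in Set.Ioi r, f s * u₁ s * s ^ 4 * Real.exp (-(s ^ 2 / 4))) * u₂ r) →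
            (∀ r : ℝ, r₀ < r →
              -(deriv (deriv v) r) - (4 / r) * deriv v r + v r + (r / 2) * deriv v r
                - l * v r = f r) ∧
            (∀ r : ℝ, r₀ < r →
              r ^ (2 * (2 - l)) * |v r| + r ^ (2 * (2 - l) + 1) * |deriv v r| ≤ C * M) := by
  refine ⟨C₀ ^ 2 * (3 + 2 / r₀ ^ 2), by positivity, ?_⟩
  intro f hf M hM v hv
  have hM0 : 0 ≤ M := le_trans
    (mul_nonneg (Real.rpow_nonneg (by linarith) _) (abs_nonneg _)) (hM (r₀ + 1) (by linarith))
  set g₁ : ℝ → ℝ := fun s => f s * u₁ s * s ^ 4 * Real.exp (-(s ^ 2 / 4)) with hg₁def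
  set g₂ : ℝ → ℝ := fun s => f s * u₂ s * s ^ 4 * Real.exp (-(s ^ 2 / 4)) with hg₂def
  set A : ℝ → ℝ := fun x => ∫ s in Set.Ioi x, g₂ s with hAdef
  set B : ℝ → ℝ := fun x => ∫ s in Set.Ioi x, g₁ s with hBdef
  have hvr : ∀ x, v x = A x * u₁ x - B x * u₂ x := by
    intro x
    rw [hv x]
  -- pointwise bound on f
  have hfb : ∀ s, r₀ < s → |f s| ≤ M * s ^ (2 * l - 4) := by
    intro s hs
    have hs0 : 0 < s := lt_trans hr₀ hs
    calc |f s| = s ^ (2 * l - 4) * (s ^ (2 * (2 - l)) * |f s|) := by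
          rw [← mul_assoc, ← Real.rpow_add hs0, show 2 * l - 4 + 2 * (2 - l) = 0 by ring,
            Real.rpow_zero, one_mul]
      _ ≤ s ^ (2 * l - 4) * M :=
          mul_le_mul_of_nonneg_left (hM s hs) (Real.rpow_nonneg hs0.le _)
      _ = M * s ^ (2 * l - 4) := mul_comm _ _
  -- pointwise bounds on g₁, g₂
  have hg₂b : ∀ s, r₀ < s → |g₂ s| ≤ M * C₀ * s ^ (-3 : ℝ) := by
    intro s hs
    have hs0 : 0 < s := lt_trans hr₀ hs
    have h4 : (s : ℝ) ^ (4 : ℕ) = s ^ ((4 : ℝ)) := by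
      rw [← Real.rpow_natCast s 4]; norm_num
    have hE : Real.exp (s ^ 2 / 4) * Real.exp (-(s ^ 2 / 4)) = 1 := by
      rw [← Real.exp_add]; simp
    calc |g₂ s| = |f s| * |u₂ s| * s ^ 4 * Real.exp (-(s ^ 2 / 4)) := by
          simp only [hg₂def, abs_mul, Real.abs_exp, abs_of_nonneg (pow_nonneg hs0.le 4)]
      _ ≤ (M * s ^ (2 * l - 4)) * (C₀ * s ^ (-3 - 2 * l) * Real.exp (s ^ 2 / 4)) * s ^ 4
            * Real.exp (-(s ^ 2 / 4)) := by
          apply mul_le_mul_of_nonneg_right _ (Real.exp_pos _).le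
          apply mul_le_mul_of_nonneg_right _ (pow_nonneg hs0.le 4)
          exact mul_le_mul (hfb s hs) (hb₂ s hs) (abs_nonneg _)
            (mul_nonneg hM0 (Real.rpow_nonneg hs0.le _))
      _ = M * C₀ * (s ^ (2 * l - 4) * s ^ (-3 - 2 * l) * s ^ ((4 : ℝ)))
            * (Real.exp (s ^ 2 / 4) * Real.exp (-(s ^ 2 / 4))) := by rw [h4]; ring
      _ = M * C₀ * s ^ (-3 : ℝ) := by
          rw [hE, mul_one, ← Real.rpow_add hs0, ← Real.rpow_add hs0,
            show 2 * l - 4 + (-3 - 2 * l) + (4 : ℝ) = -3 by ring]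
  have hg₁b : ∀ s, r₀ < s → |g₁ s| ≤ M * C₀ * s ^ (4 * l - 2) * Real.exp (-(s ^ 2 / 4)) := by
    intro s hs
    have hs0 : 0 < s := lt_trans hr₀ hs
    have h4 : (s : ℝ) ^ (4 : ℕ) = s ^ ((4 : ℝ)) := by
      rw [← Real.rpow_natCast s 4]; norm_num
    calc |g₁ s| = |f s| * |u₁ s| * s ^ 4 * Real.exp (-(s ^ 2 / 4)) := by
          simp only [hg₁def, abs_mul, Real.abs_exp, abs_of_nonneg (pow_nonneg hs0.le 4)]
      _ ≤ (M * s ^ (2 * l - 4)) * (C₀ * s ^ (2 * (l - 1))) * s ^ 4 * Real.exp (-(s ^ 2 / 4)) := by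
          apply mul_le_mul_of_nonneg_right _ (Real.exp_pos _).le
          apply mul_le_mul_of_nonneg_right _ (pow_nonneg hs0.le 4)
          exact mul_le_mul (hfb s hs) (hb₁ s hs) (abs_nonneg _)
            (mul_nonneg hM0 (Real.rpow_nonneg hs0.le _))
      _ = M * C₀ * (s ^ (2 * l - 4) * s ^ (2 * (l - 1)) * s ^ ((4 : ℝ)))
            * Real.exp (-(s ^ 2 / 4)) := by rw [h4]; ring
      _ = M * C₀ * s ^ (4 * l - 2) * Real.exp (-(s ^ 2 / 4)) := by
          rw [← Real.rpow_add hs0, ← Real.rpow_add hs0,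
            show 2 * l - 4 + 2 * (l - 1) + (4 : ℝ) = 4 * l - 2 by ring]
  have hg₁b' : ∀ a s, r₀ < a → a ≤ s →
      |g₁ s| ≤ (M * C₀ * a ^ (4 * l - 3)) * (s * Real.exp (-(s ^ 2 / 4))) := by
    intro a s ha has
    have ha0 : 0 < a := lt_trans hr₀ ha
    have hs0 : 0 < s := lt_of_lt_of_le ha0 has
    calc |g₁ s| ≤ M * C₀ * s ^ (4 * l - 2) * Real.exp (-(s ^ 2 / 4)) :=
          hg₁b s (lt_of_lt_of_le ha has)
      _ = (M * C₀ * s ^ (4 * l - 3)) * (s * Real.exp (-(s ^ 2 / 4))) := by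
          rw [show (4 * l - 2 : ℝ) = 4 * l - 3 + 1 by ring, Real.rpow_add hs0, Real.rpow_one]
          ring
      _ ≤ (M * C₀ * a ^ (4 * l - 3)) * (s * Real.exp (-(s ^ 2 / 4))) := by
          apply mul_le_mul_of_nonneg_right _ (mul_nonneg hs0.le (Real.exp_pos _).le)
          exact mul_le_mul_of_nonneg_left
            (Real.rpow_le_rpow_of_nonpos ha0 has (by linarith))
            (mul_nonneg hM0 hC₀.le)
  -- continuity of g₁ g₂
  have hexpc : Continuous fun s : ℝ => Real.exp (-(s ^ 2 / 4)) := by fun_prop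
  have hcontg₂ : ContinuousOn g₂ (Set.Ioi r₀) :=
    ((hf.mul (hu₂.continuousOn)).mul (continuous_pow 4).continuousOn).mul hexpc.continuousOn
  have hcontg₁ : ContinuousOn g₁ (Set.Ioi r₀) :=
    ((hf.mul (hu₁.continuousOn)).mul (continuous_pow 4).continuousOn).mul hexpc.continuousOn
  -- integrability
  have hint₂ : ∀ a, r₀ < a → IntegrableOn g₂ (Set.Ioi a) := by
    intro a ha
    have ha0 : 0 < a := lt_trans hr₀ ha
    have hbdd : IntegrableOn (fun s : ℝ => M * C₀ * s ^ (-3 : ℝ)) (Set.Ioi a) :=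
      (integrableOn_Ioi_rpow_of_lt (by norm_num) ha0).const_mul (M * C₀)
    apply Integrable.mono' hbdd
      ((hcontg₂.mono (Set.Ioi_subset_Ioi ha.le)).aestronglyMeasurable measurableSet_Ioi)
    filter_upwards [ae_restrict_mem measurableSet_Ioi] with s hs
    rw [Real.norm_eq_abs]
    exact hg₂b s (lt_trans ha hs)
  have hint₁ : ∀ a, r₀ < a → IntegrableOn g₁ (Set.Ioi a) := by
    intro a ha
    have ha0 : 0 < a := lt_trans hr₀ ha
    have hbdd : IntegrableOn
        (fun s : ℝ => (M * C₀ * a ^ (4 * l - 3)) * (s * Real.exp (-(s ^ 2 / 4))))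
        (Set.Ioi a) := ((aux_int_exp ha0.le).1).const_mul _
    apply Integrable.mono' hbdd
      ((hcontg₁.mono (Set.Ioi_subset_Ioi ha.le)).aestronglyMeasurable measurableSet_Ioi)
    filter_upwards [ae_restrict_mem measurableSet_Ioi] with s hs
    rw [Real.norm_eq_abs]
    exact hg₁b' a s ha (le_of_lt hs)
  -- bounds on A and B
  have hAb : ∀ r, r₀ < r → |A r| ≤ M * C₀ / 2 * r ^ (-2 : ℝ) := by
    intro r hr
    have hr0 : 0 < r := lt_trans hr₀ hr
    have hbdd : IntegrableOn (fun s : ℝ => M * C₀ * s ^ (-3 : ℝ)) (Set.Ioi r) :=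
      (integrableOn_Ioi_rpow_of_lt (by norm_num) hr0).const_mul (M * C₀)
    have h1 : ‖A r‖ ≤ ∫ s in Set.Ioi r, M * C₀ * s ^ (-3 : ℝ) := by
      apply norm_integral_le_of_norm_le hbdd
      filter_upwards [ae_restrict_mem measurableSet_Ioi] with s hs
      rw [Real.norm_eq_abs]
      exact hg₂b s (lt_trans hr hs)
    rw [Real.norm_eq_abs] at h1
    calc |A r| ≤ ∫ s in Set.Ioi r, M * C₀ * s ^ (-3 : ℝ) := h1
      _ = M * C₀ * ∫ s in Set.Ioi r, s ^ (-3 : ℝ) := by rw [MeasureTheory.integral_const_mul]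
      _ = M * C₀ * (-r ^ ((-3 : ℝ) + 1) / ((-3 : ℝ) + 1)) := by
          rw [integral_Ioi_rpow_of_lt (by norm_num) hr0]
      _ = M * C₀ / 2 * r ^ (-2 : ℝ) := by norm_num; ring
  have hBb : ∀ r, r₀ < r → |B r| ≤ 2 * M * C₀ * r ^ (4 * l - 3) * Real.exp (-(r ^ 2 / 4)) := by
    intro r hr
    have hr0 : 0 < r := lt_trans hr₀ hr
    have hbdd : IntegrableOn
        (fun s : ℝ => (M * C₀ * r ^ (4 * l - 3)) * (s * Real.exp (-(s ^ 2 / 4))))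
        (Set.Ioi r) := ((aux_int_exp hr0.le).1).const_mul _
    have h1 : ‖B r‖ ≤ ∫ s in Set.Ioi r,
        (M * C₀ * r ^ (4 * l - 3)) * (s * Real.exp (-(s ^ 2 / 4))) := by
      apply norm_integral_le_of_norm_le hbdd
      filter_upwards [ae_restrict_mem measurableSet_Ioi] with s hs
      rw [Real.norm_eq_abs]
      exact hg₁b' r s hr (le_of_lt hs)
    rw [Real.norm_eq_abs] at h1
    calc |B r| ≤ ∫ s in Set.Ioi r,
          (M * C₀ * r ^ (4 * l - 3)) * (s * Real.exp (-(s ^ 2 / 4))) := h1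
      _ = (M * C₀ * r ^ (4 * l - 3)) * ∫ s in Set.Ioi r, s * Real.exp (-(s ^ 2 / 4)) := by
          rw [MeasureTheory.integral_const_mul]
      _ = (M * C₀ * r ^ (4 * l - 3)) * (2 * Real.exp (-(r ^ 2 / 4))) := by
          rw [(aux_int_exp hr0.le).2]
      _ = 2 * M * C₀ * r ^ (4 * l - 3) * Real.exp (-(r ^ 2 / 4)) := by ring
  -- derivatives of A and B
  have hA' : ∀ r, r₀ < r → HasDerivAt A (-(g₂ r)) r := fun r hr =>
    aux_hasDerivAt_integral_Ioi hr hint₂ hcontg₂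
  have hB' : ∀ r, r₀ < r → HasDerivAt B (-(g₁ r)) r := fun r hr =>
    aux_hasDerivAt_integral_Ioi hr hint₁ hcontg₁
  -- derivatives of u₁ u₂
  have hu₁d : ∀ r, r₀ < r → HasDerivAt u₁ (deriv u₁ r) r := fun r hr =>
    ((hu₁.differentiableOn (by norm_num)).differentiableAt (isOpen_Ioi.mem_nhds hr)).hasDerivAt
  have hu₂d : ∀ r, r₀ < r → HasDerivAt u₂ (deriv u₂ r) r := fun r hr =>
    ((hu₂.differentiableOn (by norm_num)).differentiableAt (isOpen_Ioi.mem_nhds hr)).hasDerivAt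
  have hdu₁ : ContDiffOn ℝ 1 (deriv u₁) (Set.Ioi r₀) :=
    hu₁.deriv_of_isOpen isOpen_Ioi (by norm_num)
  have hdu₂ : ContDiffOn ℝ 1 (deriv u₂) (Set.Ioi r₀) :=
    hu₂.deriv_of_isOpen isOpen_Ioi (by norm_num)
  have hu₁dd : ∀ r, r₀ < r → HasDerivAt (deriv u₁) (deriv (deriv u₁) r) r := fun r hr =>
    ((hdu₁.differentiableOn one_ne_zero).differentiableAt (isOpen_Ioi.mem_nhds hr)).hasDerivAt
  have hu₂dd : ∀ r, r₀ < r → HasDerivAt (deriv u₂) (deriv (deriv u₂) r) r := fun r hr =>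
    ((hdu₂.differentiableOn one_ne_zero).differentiableAt (isOpen_Ioi.mem_nhds hr)).hasDerivAt
  -- first derivative of v
  have hvd : ∀ r, r₀ < r → HasDerivAt v (A r * deriv u₁ r - B r * deriv u₂ r) r := by
    intro r hr
    have h := ((hA' r hr).mul (hu₁d r hr)).sub ((hB' r hr).mul (hu₂d r hr))
    have hveq : v = fun x => A x * u₁ x - B x * u₂ x := funext hvr
    rw [hveq]
    refine h.congr_deriv ?_
    simp only [hg₁def, hg₂def]
    ring
  have hderiv_v : ∀ r, r₀ < r → deriv v r = A r * deriv u₁ r - B r * deriv u₂ r :=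
    fun r hr => (hvd r hr).deriv
  -- second derivative of v
  have hdd_v : ∀ r, r₀ < r → deriv (deriv v) r =
      (-(g₂ r) * deriv u₁ r + A r * deriv (deriv u₁) r)
        - (-(g₁ r) * deriv u₂ r + B r * deriv (deriv u₂) r) := by
    intro r hr
    have hEq : deriv v =ᶠ[𝓝 r] fun x => A x * deriv u₁ x - B x * deriv u₂ x := by
      filter_upwards [isOpen_Ioi.mem_nhds hr] with x hx
      exact hderiv_v x hx
    rw [hEq.deriv_eq]
    exact (((hA' r hr).mul (hu₁dd r hr)).sub ((hB' r hr).mul (hu₂dd r hr))).deriv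
  constructor
  · -- ODE
    intro r hr
    have hr0 : 0 < r := lt_trans hr₀ hr
    have hW' : (deriv u₁ r * u₂ r - deriv u₂ r * u₁ r) * r ^ 4 = Real.exp (r ^ 2 / 4) := by
      rw [hW r hr]
      field_simp
    have hexp : Real.exp (-(r ^ 2 / 4)) * Real.exp (r ^ 2 / 4) = 1 := by
      rw [← Real.exp_add]; simp
    rw [hdd_v r hr, hderiv_v r hr, hvr r]
    simp only [hg₁def, hg₂def]
    linear_combination A r * hode₁ r hr - B r * hode₂ r hr
      + f r * Real.exp (-(r ^ 2 / 4)) * hW' + f r * hexp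
  · -- bounds
    intro r hr
    have hr0 : 0 < r := lt_trans hr₀ hr
    have hexp : Real.exp (-(r ^ 2 / 4)) * Real.exp (r ^ 2 / 4) = 1 := by
      rw [← Real.exp_add]; simp
    have hr₀pow : r₀ ^ (-2 : ℝ) = 1 / r₀ ^ 2 := by
      rw [show (-2 : ℝ) = ((-2 : ℤ) : ℝ) by norm_num, Real.rpow_intCast, zpow_neg, one_div, zpow_two, pow_two]
    have hA1 := hAb r hr
    have hB1 := hBb r hr
    have hu1 := hb₁ r hr
    have hu2 := hb₂ r hr
    have hu1' := hb₁' r hr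
    have hu2' := hb₂' r hr
    have hAnn : (0 : ℝ) ≤ M * C₀ / 2 * r ^ (-2 : ℝ) :=
      mul_nonneg (div_nonneg (mul_nonneg hM0 hC₀.le) (by norm_num)) (Real.rpow_nonneg hr0.le _)
    have hBnn : (0 : ℝ) ≤ 2 * M * C₀ * r ^ (4 * l - 3) * Real.exp (-(r ^ 2 / 4)) := by
      apply mul_nonneg _ (Real.exp_pos _).le
      exact mul_nonneg (mul_nonneg (by linarith) hC₀.le) (Real.rpow_nonneg hr0.le _)
    have s1 : r ^ (2 * (2 - l)) * (|A r| * |u₁ r|) ≤ M * C₀ ^ 2 / 2 := by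
      calc r ^ (2 * (2 - l)) * (|A r| * |u₁ r|)
          ≤ r ^ (2 * (2 - l)) * ((M * C₀ / 2 * r ^ (-2 : ℝ)) * (C₀ * r ^ (2 * (l - 1)))) :=
            mul_le_mul_of_nonneg_left
              (mul_le_mul hA1 hu1 (abs_nonneg _) hAnn) (Real.rpow_nonneg hr0.le _)
        _ = M * C₀ ^ 2 / 2 * (r ^ (2 * (2 - l)) * r ^ (-2 : ℝ) * r ^ (2 * (l - 1))) := by ring
        _ = M * C₀ ^ 2 / 2 := by
            rw [← Real.rpow_add hr0, ← Real.rpow_add hr0,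
              show 2 * (2 - l) + (-2 : ℝ) + 2 * (l - 1) = 0 by ring, Real.rpow_zero, mul_one]
    have s2 : r ^ (2 * (2 - l)) * (|B r| * |u₂ r|) ≤ 2 * M * C₀ ^ 2 / r₀ ^ 2 := by
      calc r ^ (2 * (2 - l)) * (|B r| * |u₂ r|)
          ≤ r ^ (2 * (2 - l)) * ((2 * M * C₀ * r ^ (4 * l - 3) * Real.exp (-(r ^ 2 / 4)))
              * (C₀ * r ^ (-3 - 2 * l) * Real.exp (r ^ 2 / 4))) :=
            mul_le_mul_of_nonneg_left
              (mul_le_mul hB1 hu2 (abs_nonneg _) hBnn) (Real.rpow_nonneg hr0.le _)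
        _ = 2 * M * C₀ ^ 2 * (r ^ (2 * (2 - l)) * r ^ (4 * l - 3) * r ^ (-3 - 2 * l))
              * (Real.exp (-(r ^ 2 / 4)) * Real.exp (r ^ 2 / 4)) := by ring
        _ = 2 * M * C₀ ^ 2 * r ^ (-2 : ℝ) := by
            rw [hexp, mul_one, ← Real.rpow_add hr0, ← Real.rpow_add hr0,
              show 2 * (2 - l) + (4 * l - 3) + (-3 - 2 * l) = (-2 : ℝ) by ring]
        _ ≤ 2 * M * C₀ ^ 2 * r₀ ^ (-2 : ℝ) := by
            apply mul_le_mul_of_nonneg_left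
              (Real.rpow_le_rpow_of_nonpos hr₀ hr.le (by norm_num))
            positivity
        _ = 2 * M * C₀ ^ 2 / r₀ ^ 2 := by rw [hr₀pow]; ring
    have s3 : r ^ (2 * (2 - l) + 1) * (|A r| * |deriv u₁ r|) ≤ M * C₀ ^ 2 / 2 := by
      calc r ^ (2 * (2 - l) + 1) * (|A r| * |deriv u₁ r|)
          ≤ r ^ (2 * (2 - l) + 1) * ((M * C₀ / 2 * r ^ (-2 : ℝ)) * (C₀ * r ^ (2 * l - 3))) :=
            mul_le_mul_of_nonneg_left
              (mul_le_mul hA1 hu1' (abs_nonneg _) hAnn) (Real.rpow_nonneg hr0.le _)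
        _ = M * C₀ ^ 2 / 2 * (r ^ (2 * (2 - l) + 1) * r ^ (-2 : ℝ) * r ^ (2 * l - 3)) := by ring
        _ = M * C₀ ^ 2 / 2 := by
            rw [← Real.rpow_add hr0, ← Real.rpow_add hr0,
              show 2 * (2 - l) + 1 + (-2 : ℝ) + (2 * l - 3) = 0 by ring, Real.rpow_zero, mul_one]
    have s4 : r ^ (2 * (2 - l) + 1) * (|B r| * |deriv u₂ r|) ≤ 2 * M * C₀ ^ 2 := by
      calc r ^ (2 * (2 - l) + 1) * (|B r| * |deriv u₂ r|)
          ≤ r ^ (2 * (2 - l) + 1) * ((2 * M * C₀ * r ^ (4 * l - 3) * Real.exp (-(r ^ 2 / 4)))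
              * (C₀ * r ^ (-2 - 2 * l) * Real.exp (r ^ 2 / 4))) :=
            mul_le_mul_of_nonneg_left
              (mul_le_mul hB1 hu2' (abs_nonneg _) hBnn) (Real.rpow_nonneg hr0.le _)
        _ = 2 * M * C₀ ^ 2 * (r ^ (2 * (2 - l) + 1) * r ^ (4 * l - 3) * r ^ (-2 - 2 * l))
              * (Real.exp (-(r ^ 2 / 4)) * Real.exp (r ^ 2 / 4)) := by ring
        _ = 2 * M * C₀ ^ 2 := by
            rw [hexp, mul_one, ← Real.rpow_add hr0, ← Real.rpow_add hr0,
              show 2 * (2 - l) + 1 + (4 * l - 3) + (-2 - 2 * l) = (0 : ℝ) by ring,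
              Real.rpow_zero, mul_one]
    have t1 : r ^ (2 * (2 - l)) * |v r| ≤ M * C₀ ^ 2 / 2 + 2 * M * C₀ ^ 2 / r₀ ^ 2 := by
      rw [hvr r]
      calc r ^ (2 * (2 - l)) * |A r * u₁ r - B r * u₂ r|
          ≤ r ^ (2 * (2 - l)) * (|A r| * |u₁ r| + |B r| * |u₂ r|) := by
            apply mul_le_mul_of_nonneg_left _ (Real.rpow_nonneg hr0.le _)
            calc |A r * u₁ r - B r * u₂ r| ≤ |A r * u₁ r| + |B r * u₂ r| := abs_sub _ _
              _ = |A r| * |u₁ r| + |B r| * |u₂ r| := by rw [abs_mul, abs_mul]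
        _ = r ^ (2 * (2 - l)) * (|A r| * |u₁ r|) + r ^ (2 * (2 - l)) * (|B r| * |u₂ r|) := by
            ring
        _ ≤ M * C₀ ^ 2 / 2 + 2 * M * C₀ ^ 2 / r₀ ^ 2 := add_le_add s1 s2
    have t2 : r ^ (2 * (2 - l) + 1) * |deriv v r| ≤ M * C₀ ^ 2 / 2 + 2 * M * C₀ ^ 2 := by
      rw [hderiv_v r hr]
      calc r ^ (2 * (2 - l) + 1) * |A r * deriv u₁ r - B r * deriv u₂ r|
          ≤ r ^ (2 * (2 - l) + 1) * (|A r| * |deriv u₁ r| + |B r| * |deriv u₂ r|) := by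
            apply mul_le_mul_of_nonneg_left _ (Real.rpow_nonneg hr0.le _)
            calc |A r * deriv u₁ r - B r * deriv u₂ r|
                ≤ |A r * deriv u₁ r| + |B r * deriv u₂ r| := abs_sub _ _
              _ = |A r| * |deriv u₁ r| + |B r| * |deriv u₂ r| := by rw [abs_mul, abs_mul]
        _ = r ^ (2 * (2 - l) + 1) * (|A r| * |deriv u₁ r|)
              + r ^ (2 * (2 - l) + 1) * (|B r| * |deriv u₂ r|) := by ring
        _ ≤ M * C₀ ^ 2 / 2 + 2 * M * C₀ ^ 2 := add_le_add s3 s4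
    have hfinal : M * C₀ ^ 2 / 2 + 2 * M * C₀ ^ 2 / r₀ ^ 2 + (M * C₀ ^ 2 / 2 + 2 * M * C₀ ^ 2)
        = C₀ ^ 2 * (3 + 2 / r₀ ^ 2) * M := by
      field_simp
      ring
    linarith [t1, t2]
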